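/- Fix δ ∈ (0, π/2). For every α ∈ [0,1] there exists a constant C = C(α, δ) > 0, independent of j, such that for every j ∈ ℕ, every λ ∈ Γ_δ, and every Schwartz function u on ℝ: ∬_{ℝ²} |ζ₁ − ζ₂|^{2(j+1)} |û(ζ₁ − ζ₂)|² / ( |ζ₁ − λ²|² |ζ₂ − λ²|² ) dζ₁ dζ₂ ≤ C |λ|^{−2−4α} ‖u‖²_{H^{j+α}(ℝ)}. -/

import Mathlib

open MeasureTheory Complex

/-- The Fourier transform with normalization `û(ζ) = (2π)^{-1/2} ∫ e^{ixζ} u(x) dx`. -/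
noncomputable def FT (u : ℝ → ℂ) (ζ : ℝ) : ℂ :=
  (Real.sqrt (2 * Real.pi) : ℂ)⁻¹ * ∫ x : ℝ, Complex.exp (Complex.I * x * ζ) * u x

/-- The squared Sobolev norm `‖u‖²_{H^s} = ∫ (1+ζ²)^s |û(ζ)|² dζ`. -/
noncomputable def sobNormSq (s : ℝ) (u : ℝ → ℂ) : ℝ :=
  ∫ ζ : ℝ, (1 + ζ ^ 2) ^ s * ‖FT u ζ‖ ^ 2

/-- The Sobolev norm `‖u‖_{H^s}`. -/
noncomputable def sobNorm (s : ℝ) (u : ℝ → ℂ) : ℝ :=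
  Real.sqrt (sobNormSq s u)

/-- The sector `Γ_δ = {λ ∈ ℂ : Im(λ²) > 0, δ < arg(λ²) < π − δ}`. -/
def GammaSet (δ : ℝ) : Set ℂ :=
  {l : ℂ | 0 < (l ^ 2).im ∧ δ < (l ^ 2).arg ∧ (l ^ 2).arg < Real.pi - δ}

/- ### Auxiliary lemmas -/

lemma integral_lorentz {b : ℝ} (hb : 0 < b) (c : ℝ) :
    ∫ x : ℝ, ((x - c) ^ 2 + b ^ 2)⁻¹ = Real.pi / b := by
  rw [integral_sub_right_eq_self (fun x : ℝ => (x ^ 2 + b ^ 2)⁻¹) c]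
  have h : ∀ x : ℝ, (x ^ 2 + b ^ 2)⁻¹ = b⁻¹ * b⁻¹ * (1 + (x / b) ^ 2)⁻¹ := by
    intro x
    rw [div_pow, ← mul_inv, ← mul_inv]
    congr 1
    field_simp
    ring
  simp_rw [h]
  rw [integral_const_mul, MeasureTheory.Measure.integral_comp_div (fun x : ℝ => (1 + x ^ 2)⁻¹) b,
    integral_univ_inv_one_add_sq, abs_of_pos hb]
  simp only [smul_eq_mul]
  field_simp

lemma integrable_lorentz {b : ℝ} (hb : 0 < b) (c : ℝ) :
    Integrable fun x : ℝ => ((x - c) ^ 2 + b ^ 2)⁻¹ := by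
  have h1 : Integrable fun x : ℝ => (1 + x ^ 2)⁻¹ := integrable_inv_one_add_sq
  have h2 := ((h1.comp_div hb.ne').const_mul (b⁻¹ * b⁻¹)).comp_sub_right c
  refine h2.congr (Filter.Eventually.of_forall fun x => ?_)
  simp only
  rw [div_pow, ← mul_inv, ← mul_inv]
  congr 1
  field_simp
  ring

lemma lintegral_lorentz {b : ℝ} (hb : 0 < b) (c : ℝ) :
    ∫⁻ x : ℝ, ENNReal.ofReal (((x - c) ^ 2 + b ^ 2)⁻¹) = ENNReal.ofReal (Real.pi / b) := by
  rw [← ofReal_integral_eq_lintegral_ofReal (integrable_lorentz hb c)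
    (Filter.Eventually.of_forall fun x => by positivity), integral_lorentz hb c]

lemma kernel_bound {b : ℝ} (hb : 0 < b) (a ζ x : ℝ) :
    ((x + ζ - a) ^ 2 + b ^ 2)⁻¹ * ((x - a) ^ 2 + b ^ 2)⁻¹
      ≤ (ζ ^ 2 / 4 + b ^ 2)⁻¹ *
        (((x + ζ - a) ^ 2 + b ^ 2)⁻¹ + ((x - a) ^ 2 + b ^ 2)⁻¹) := by
  have hP1 : 0 < (x + ζ - a) ^ 2 + b ^ 2 := by positivity
  have hP2 : 0 < (x - a) ^ 2 + b ^ 2 := by positivity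
  have hQ : 0 < ζ ^ 2 / 4 + b ^ 2 := by positivity
  have key : ζ ^ 2 / 4 ≤ (x + ζ - a) ^ 2 ∨ ζ ^ 2 / 4 ≤ (x - a) ^ 2 := by
    by_contra hcon
    push_neg at hcon
    obtain ⟨h1, h2⟩ := hcon
    have habs : |ζ| ≤ |x + ζ - a| + |x - a| := by
      have h := abs_sub (x + ζ - a) (x - a)
      rwa [show x + ζ - a - (x - a) = ζ by ring] at h
    nlinarith [habs, _root_.sq_abs ζ, _root_.sq_abs (x + ζ - a), _root_.sq_abs (x - a),
      abs_nonneg (x + ζ - a), abs_nonneg (x - a),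
      sq_nonneg (|x + ζ - a| - |x - a|), sq_nonneg (|x + ζ - a| + |x - a|)]
  rcases key with h | h
  · have h1 : ζ ^ 2 / 4 + b ^ 2 ≤ (x + ζ - a) ^ 2 + b ^ 2 := by linarith
    have := mul_le_mul_of_nonneg_right (inv_anti₀ hQ h1) (le_of_lt (inv_pos.mpr hP2))
    calc ((x + ζ - a) ^ 2 + b ^ 2)⁻¹ * ((x - a) ^ 2 + b ^ 2)⁻¹
        ≤ (ζ ^ 2 / 4 + b ^ 2)⁻¹ * ((x - a) ^ 2 + b ^ 2)⁻¹ := this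
      _ ≤ _ := by
          rw [mul_add]
          have : (0:ℝ) ≤ (ζ ^ 2 / 4 + b ^ 2)⁻¹ * ((x + ζ - a) ^ 2 + b ^ 2)⁻¹ := by positivity
          linarith
  · have h1 : ζ ^ 2 / 4 + b ^ 2 ≤ (x - a) ^ 2 + b ^ 2 := by linarith
    have := mul_le_mul_of_nonneg_left (inv_anti₀ hQ h1) (le_of_lt (inv_pos.mpr hP1))
    calc ((x + ζ - a) ^ 2 + b ^ 2)⁻¹ * ((x - a) ^ 2 + b ^ 2)⁻¹
        ≤ ((x + ζ - a) ^ 2 + b ^ 2)⁻¹ * (ζ ^ 2 / 4 + b ^ 2)⁻¹ := this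
      _ ≤ _ := by
          rw [mul_add, mul_comm]
          have : (0:ℝ) ≤ (ζ ^ 2 / 4 + b ^ 2)⁻¹ * ((x - a) ^ 2 + b ^ 2)⁻¹ := by positivity
          linarith

lemma weight_bound {b α : ℝ} (hb : 0 < b) (hα0 : 0 ≤ α) (hα1 : α ≤ 1) (j : ℕ) (ζ : ℝ) :
    |ζ| ^ (2 * (j + 1)) * (ζ ^ 2 / 4 + b ^ 2)⁻¹ * (2 * Real.pi / b)
      ≤ 8 * Real.pi * b ^ (-1 - 2 * α) * (1 + ζ ^ 2) ^ ((j : ℝ) + α) := by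
  have hbase : (0:ℝ) < 1 + ζ ^ 2 := by positivity
  rcases eq_or_ne ζ 0 with rfl | hζ
  · have : |(0:ℝ)| ^ (2 * (j + 1)) = 0 := by
      simp [pow_eq_zero_iff]
    rw [this, zero_mul, zero_mul]
    positivity
  · have hζ2 : (0:ℝ) < ζ ^ 2 := by positivity
    have hgm : (ζ ^ 2 / 4) ^ (1 - α) * (b ^ 2) ^ (α : ℝ) ≤ ζ ^ 2 / 4 + b ^ 2 := by
      have h := Real.geom_mean_le_arith_mean2_weighted (by linarith : (0:ℝ) ≤ 1 - α) hα0
        (by positivity : (0:ℝ) ≤ ζ ^ 2 / 4) (by positivity : (0:ℝ) ≤ b ^ 2) (by ring)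
      refine h.trans ?_
      nlinarith [sq_nonneg ζ, sq_nonneg b]
    have hgm0 : (0:ℝ) < (ζ ^ 2 / 4) ^ (1 - α) * (b ^ 2) ^ (α : ℝ) := by
      have h1 : (0:ℝ) < (ζ ^ 2 / 4) ^ (1 - α) := Real.rpow_pos_of_pos (by positivity) _
      have h2 : (0:ℝ) < (b ^ 2) ^ (α : ℝ) := Real.rpow_pos_of_pos (by positivity) _
      positivity
    have hinv : (ζ ^ 2 / 4 + b ^ 2)⁻¹ ≤ ((ζ ^ 2 / 4) ^ (1 - α) * (b ^ 2) ^ (α : ℝ))⁻¹ :=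
      inv_anti₀ hgm0 hgm
    have hsplit : |ζ| ^ (2 * (j + 1)) = (ζ ^ 2) ^ j * ζ ^ 2 := by
      rw [show 2 * (j + 1) = 2 * j + 2 by ring, pow_add, pow_mul, _root_.sq_abs]
    have hq : ζ ^ 2 * ((ζ ^ 2 / 4) ^ (1 - α))⁻¹ = 4 * (ζ ^ 2 / 4) ^ (α : ℝ) := by
      rw [Real.rpow_sub (by positivity), Real.rpow_one]
      field_simp
    have hba : (b ^ 2) ^ (α : ℝ) = b ^ (2 * α) := by
      rw [← Real.rpow_natCast b 2, ← Real.rpow_mul hb.le]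
      norm_num
    have key : ζ ^ 2 * (ζ ^ 2 / 4 + b ^ 2)⁻¹ ≤ 4 * (ζ ^ 2) ^ (α : ℝ) * (b ^ (2 * α))⁻¹ := by
      calc ζ ^ 2 * (ζ ^ 2 / 4 + b ^ 2)⁻¹
          ≤ ζ ^ 2 * ((ζ ^ 2 / 4) ^ (1 - α) * (b ^ 2) ^ (α : ℝ))⁻¹ := by
            exact mul_le_mul_of_nonneg_left hinv (by positivity)
        _ = (ζ ^ 2 * ((ζ ^ 2 / 4) ^ (1 - α))⁻¹) * ((b ^ 2) ^ (α : ℝ))⁻¹ := by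
            rw [mul_inv]; ring
        _ = 4 * (ζ ^ 2 / 4) ^ (α : ℝ) * (b ^ (2 * α))⁻¹ := by rw [hq, hba]
        _ ≤ 4 * (ζ ^ 2) ^ (α : ℝ) * (b ^ (2 * α))⁻¹ := by
            have : (ζ ^ 2 / 4) ^ (α : ℝ) ≤ (ζ ^ 2) ^ (α : ℝ) :=
              Real.rpow_le_rpow (by positivity) (by linarith) hα0
            have hbp : (0:ℝ) < b ^ (2 * α) := Real.rpow_pos_of_pos hb _
            exact mul_le_mul_of_nonneg_right (by linarith) (by positivity)
    have hpow : (ζ ^ 2) ^ j * (ζ ^ 2) ^ (α : ℝ) ≤ (1 + ζ ^ 2) ^ ((j : ℝ) + α) := by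
      rw [Real.rpow_add hbase, ← Real.rpow_natCast (ζ ^ 2) j]
      have h1 : (ζ ^ 2) ^ (j : ℝ) ≤ (1 + ζ ^ 2) ^ (j : ℝ) :=
        Real.rpow_le_rpow (by positivity) (by linarith) (by positivity)
      have h2 : (ζ ^ 2) ^ (α : ℝ) ≤ (1 + ζ ^ 2) ^ (α : ℝ) :=
        Real.rpow_le_rpow (by positivity) (by linarith) hα0
      exact mul_le_mul h1 h2 (Real.rpow_nonneg (by positivity) _)
        (Real.rpow_nonneg (by positivity) _)
    have hbneg : b ^ (-1 - 2 * α) = b⁻¹ * (b ^ (2 * α))⁻¹ := by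
      rw [show -1 - 2 * α = (-1) + (-(2 * α)) by ring, Real.rpow_add hb,
        Real.rpow_neg_one, Real.rpow_neg hb.le]
    rw [hsplit, hbneg]
    have hbp : (0:ℝ) < b ^ (2 * α) := Real.rpow_pos_of_pos hb _
    calc (ζ ^ 2) ^ j * ζ ^ 2 * (ζ ^ 2 / 4 + b ^ 2)⁻¹ * (2 * Real.pi / b)
        = (ζ ^ 2) ^ j * (ζ ^ 2 * (ζ ^ 2 / 4 + b ^ 2)⁻¹) * (2 * Real.pi / b) := by ring
      _ ≤ (ζ ^ 2) ^ j * (4 * (ζ ^ 2) ^ (α : ℝ) * (b ^ (2 * α))⁻¹) * (2 * Real.pi / b) := by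
          refine mul_le_mul_of_nonneg_right (mul_le_mul_of_nonneg_left key (by positivity)) ?_
          positivity
      _ = 8 * Real.pi * ((ζ ^ 2) ^ j * (ζ ^ 2) ^ (α : ℝ)) * (b⁻¹ * (b ^ (2 * α))⁻¹) := by
          field_simp
          ring
      _ ≤ 8 * Real.pi * (1 + ζ ^ 2) ^ ((j : ℝ) + α) * (b⁻¹ * (b ^ (2 * α))⁻¹) := by
          refine mul_le_mul_of_nonneg_right (mul_le_mul_of_nonneg_left hpow (by positivity)) ?_
          positivity
      _ = 8 * Real.pi * (b⁻¹ * (b ^ (2 * α))⁻¹) * (1 + ζ ^ 2) ^ ((j : ℝ) + α) := by ring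

lemma core_bound {a b Kc : ℝ} (hb : 0 < b) {N T : ℝ → ℝ} (hNc : Continuous N)
    (hN0 : ∀ ζ, 0 ≤ N ζ) (hTc : Continuous T) (hT0 : ∀ ζ, 0 ≤ T ζ)
    (hT : Integrable T) (hKc : 0 ≤ Kc)
    (hNT : ∀ ζ, N ζ * ((ζ ^ 2 / 4 + b ^ 2)⁻¹ * (2 * Real.pi / b)) ≤ Kc * T ζ) :
    ∫⁻ q : ℝ × ℝ, ENNReal.ofReal
        (N (q.1 - q.2) * ((((q.1 - a) ^ 2 + b ^ 2) * (((q.2 - a) ^ 2 + b ^ 2)))⁻¹))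
      ≤ ENNReal.ofReal (Kc * ∫ ζ, T ζ) := by
  have hπ := Real.pi_pos
  set P : ℝ → ℝ := fun x => (x - a) ^ 2 + b ^ 2 with hP
  have hP0 : ∀ x, 0 < P x := fun x => by positivity
  have hPc : Continuous P := by fun_prop
  have hPinvc : Continuous fun x => (P x)⁻¹ := hPc.inv₀ fun x => (hP0 x).ne'
  set G : ℝ × ℝ → ENNReal := fun p =>
    ENNReal.ofReal (N p.1 * (P (p.1 + p.2) * P p.2)⁻¹) with hG
  have hGc : Continuous G := by
    apply ENNReal.continuous_ofReal.comp
    exact ((hNc.comp continuous_fst).mul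
      (((hPc.comp (continuous_fst.add continuous_snd)).mul
        (hPc.comp continuous_snd)).inv₀
          fun p => (mul_pos (hP0 _) (hP0 _)).ne'))
  have hFc : Continuous fun q : ℝ × ℝ => ENNReal.ofReal (N (q.1 - q.2) * (P q.1 * P q.2)⁻¹) := by
    apply ENNReal.continuous_ofReal.comp
    exact ((hNc.comp (continuous_fst.sub continuous_snd)).mul
      (((hPc.comp continuous_fst).mul (hPc.comp continuous_snd)).inv₀
        fun q => (mul_pos (hP0 _) (hP0 _)).ne'))
  calc ∫⁻ q : ℝ × ℝ, ENNReal.ofReal (N (q.1 - q.2) * ((P q.1 * P q.2)⁻¹))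
      = ∫⁻ y : ℝ, ∫⁻ x : ℝ, ENNReal.ofReal (N (x - y) * (P x * P y)⁻¹) := by
        rw [MeasureTheory.Measure.volume_eq_prod]
        exact lintegral_prod_symm _ hFc.aemeasurable
    _ = ∫⁻ y : ℝ, ∫⁻ z : ℝ, G (z, y) := by
        congr 1
        funext y
        have : (fun x : ℝ => ENNReal.ofReal (N (x - y) * (P x * P y)⁻¹))
            = fun x : ℝ => G (x - y, y) := by
          funext x
          simp only [hG, sub_add_cancel]
        rw [this]
        exact lintegral_sub_right_eq_self (fun z : ℝ => G (z, y)) y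
    _ = ∫⁻ z : ℝ, ∫⁻ y : ℝ, G (z, y) := by
        apply lintegral_lintegral_swap
        exact (hGc.comp (continuous_snd.prodMk continuous_fst)).aemeasurable
    _ ≤ ∫⁻ z : ℝ, ENNReal.ofReal (Kc * T z) := by
        apply lintegral_mono
        intro z
        have hmeas1 : Measurable fun y : ℝ => ENNReal.ofReal ((P (z + y) * P y)⁻¹) := by
          apply ENNReal.measurable_ofReal.comp
          exact (((hPc.comp (continuous_const.add continuous_id)).mul hPc).inv₀
            fun y => (mul_pos (hP0 _) (hP0 _)).ne').measurable
        calc ∫⁻ y : ℝ, G (z, y)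
            = ENNReal.ofReal (N z) * ∫⁻ y : ℝ, ENNReal.ofReal ((P (z + y) * P y)⁻¹) := by
              rw [← lintegral_const_mul _ hmeas1]
              congr 1
              funext y
              rw [hG, ← ENNReal.ofReal_mul (hN0 z)]
          _ ≤ ENNReal.ofReal (N z) *
                ENNReal.ofReal ((z ^ 2 / 4 + b ^ 2)⁻¹ * (2 * Real.pi / b)) := by
              gcongr
              have hQ0 : (0:ℝ) ≤ (z ^ 2 / 4 + b ^ 2)⁻¹ := by positivity
              calc ∫⁻ y : ℝ, ENNReal.ofReal ((P (z + y) * P y)⁻¹)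
                  ≤ ∫⁻ y : ℝ, ENNReal.ofReal ((z ^ 2 / 4 + b ^ 2)⁻¹ *
                      ((P (z + y))⁻¹ + (P y)⁻¹)) := by
                    apply lintegral_mono
                    intro y
                    apply ENNReal.ofReal_le_ofReal
                    rw [mul_inv]
                    have h := kernel_bound hb a z y
                    rw [show y + z - a = z + y - a by ring] at h
                    exact h
                _ = ENNReal.ofReal ((z ^ 2 / 4 + b ^ 2)⁻¹) *
                      ((∫⁻ y : ℝ, ENNReal.ofReal ((P (z + y))⁻¹)) +
                       (∫⁻ y : ℝ, ENNReal.ofReal ((P y)⁻¹))) := by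
                    have hm1 : Measurable fun y : ℝ => ENNReal.ofReal ((P (z + y))⁻¹) :=
                      (ENNReal.continuous_ofReal.comp
                        (hPinvc.comp (continuous_const.add continuous_id))).measurable
                    have hm2 : Measurable fun y : ℝ => ENNReal.ofReal ((P y)⁻¹) :=
                      (ENNReal.continuous_ofReal.comp hPinvc).measurable
                    rw [← lintegral_add_left hm1, ← lintegral_const_mul _ (f := fun y : ℝ =>
                      ENNReal.ofReal ((P (z + y))⁻¹) + ENNReal.ofReal ((P y)⁻¹)) (hm1.add hm2)]
                    congr 1
                    funext y
                    rw [ENNReal.ofReal_mul hQ0,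
                      ENNReal.ofReal_add (by positivity) (by positivity)]
                  _ = ENNReal.ofReal ((z ^ 2 / 4 + b ^ 2)⁻¹) *
                      (ENNReal.ofReal (Real.pi / b) + ENNReal.ofReal (Real.pi / b)) := by
                    congr 1
                    congr 1
                    · have : (fun y : ℝ => ENNReal.ofReal ((P (z + y))⁻¹))
                          = fun y : ℝ => ENNReal.ofReal (((y - (a - z)) ^ 2 + b ^ 2)⁻¹) := by
                        funext y
                        congr 2
                        rw [hP]
                        ring_nf
                      rw [this, lintegral_lorentz hb (a - z)]
                    · exact lintegral_lorentz hb a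
                  _ = ENNReal.ofReal ((z ^ 2 / 4 + b ^ 2)⁻¹ * (2 * Real.pi / b)) := by
                    rw [← ENNReal.ofReal_add (by positivity) (by positivity),
                      ← ENNReal.ofReal_mul hQ0]
                    congr 1
                    ring
          _ = ENNReal.ofReal (N z * ((z ^ 2 / 4 + b ^ 2)⁻¹ * (2 * Real.pi / b))) := by
              rw [← ENNReal.ofReal_mul (hN0 z)]
          _ ≤ ENNReal.ofReal (Kc * T z) := ENNReal.ofReal_le_ofReal (hNT z)
    _ = ENNReal.ofReal (Kc * ∫ ζ, T ζ) := by
        have : ∀ z : ℝ, ENNReal.ofReal (Kc * T z) = ENNReal.ofReal Kc * ENNReal.ofReal (T z) :=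
          fun z => ENNReal.ofReal_mul hKc
        simp_rw [this]
        have hTm : Measurable fun z => ENNReal.ofReal (T z) :=
          ENNReal.measurable_ofReal.comp hTc.measurable
        rw [lintegral_const_mul _ hTm,
          ← ofReal_integral_eq_lintegral_ofReal hT (Filter.Eventually.of_forall hT0),
          ← ENNReal.ofReal_mul hKc]

set_option maxHeartbeats 1600000 in
/-- Lemma 7 of the paper (Hilbert–Schmidt bound for the overloaded operator), in
integral form: for every `α ∈ [0,1]` there is `C = C(α,δ)`, independent of `j`, with
`∬ |ζ₁−ζ₂|^{2(j+1)}|û(ζ₁−ζ₂)|²/(|ζ₁−λ²|²|ζ₂−λ²|²) ≤ C |λ|^{−2−4α} ‖u‖²_{H^{j+α}}`. -/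
theorem overloaded_HS_bound (δ : ℝ) (hδ0 : 0 < δ) (hδ : δ < Real.pi / 2)
    (α : ℝ) (hα0 : 0 ≤ α) (hα1 : α ≤ 1) :
    ∃ C : ℝ, 0 < C ∧ ∀ j : ℕ, ∀ l ∈ GammaSet δ, ∀ u : SchwartzMap ℝ ℂ,
      (∫ q : ℝ × ℝ, |q.1 - q.2| ^ (2 * (j + 1)) * ‖FT (⇑u) (q.1 - q.2)‖ ^ 2
          / (‖(q.1 : ℂ) - l ^ 2‖ ^ 2 * ‖(q.2 : ℂ) - l ^ 2‖ ^ 2))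
        ≤ C * ‖l‖ ^ (-2 - 4 * α) * sobNormSq ((j : ℝ) + α) (⇑u) := by
  have hπ := Real.pi_pos
  have hπ3 := Real.pi_gt_three
  have hsin : 0 < Real.sin δ := Real.sin_pos_of_pos_of_lt_pi hδ0 (by linarith)
  refine ⟨8 * Real.pi * Real.sin δ ^ (-1 - 2 * α), by positivity, ?_⟩
  intro j l hl u
  obtain ⟨him, harg1, harg2⟩ := hl
  have hl0 : l ^ 2 ≠ 0 := by
    intro h; rw [h] at him; simp at him
  have hln : 0 < ‖l‖ := by
    rw [norm_pos_iff]
    intro h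
    rw [h] at hl0
    simp at hl0
  set a : ℝ := (l ^ 2).re with ha
  set b : ℝ := (l ^ 2).im with hbdef
  have hb : 0 < b := him
  -- lower bound on the imaginary part of l²
  have hbl : Real.sin δ * ‖l‖ ^ 2 ≤ b := by
    have habs : ‖l ^ 2‖ = ‖l‖ ^ 2 := by
      rw [norm_pow]
    have hsge : Real.sin δ ≤ Real.sin (l ^ 2).arg := by
      rcases le_total (l ^ 2).arg (Real.pi / 2) with h | h
      · exact Real.strictMonoOn_sin.monotoneOn ⟨by linarith, by linarith⟩
          ⟨by linarith, h⟩ harg1.le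
      · nth_rewrite 2 [← Real.sin_pi_sub]
        have hargπ := Complex.arg_le_pi (l ^ 2)
        exact Real.strictMonoOn_sin.monotoneOn ⟨by linarith, by linarith⟩
          ⟨by linarith, by linarith⟩ (by linarith)
    have him_eq : (l ^ 2).im = ‖l ^ 2‖ * Real.sin (l ^ 2).arg := by
      rw [Complex.sin_arg, mul_comm, div_mul_cancel₀ _ (norm_ne_zero_iff.mpr hl0)]
    rw [hbdef, him_eq, habs]
    have : Real.sin δ * ‖l‖ ^ 2 ≤ Real.sin (l ^ 2).arg * ‖l‖ ^ 2 :=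
      mul_le_mul_of_nonneg_right hsge (by positivity)
    linarith [this]
  -- Fourier representation via the Schwartz Fourier transform
  obtain ⟨w, hrep⟩ : ∃ w : SchwartzMap ℝ ℂ, ∀ ζ : ℝ, FT (⇑u) ζ =
      (Real.sqrt (2 * Real.pi) : ℂ)⁻¹ * w (-ζ / (2 * Real.pi)) := by
    refine ⟨SchwartzMap.fourierTransformCLM ℂ u, fun ζ => ?_⟩
    rw [FT]
    congr 1
    rw [SchwartzMap.fourierTransformCLM_apply, SchwartzMap.fourier_coe,
      Real.fourier_real_eq_integral_exp_smul]
    congr 1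
    funext x
    rw [smul_eq_mul]
    congr 1
    have h : -2 * Real.pi * x * (-ζ / (2 * Real.pi)) = x * ζ := by
      have : Real.pi ≠ 0 := Real.pi_ne_zero
      field_simp
    rw [h]
    push_cast
    ring
  have hFTc : Continuous (FT ⇑u) := by
    have : Continuous fun ζ : ℝ => (Real.sqrt (2 * Real.pi) : ℂ)⁻¹ * w (-ζ / (2 * Real.pi)) :=
      continuous_const.mul (w.continuous.comp (by fun_prop))
    exact this.congr fun ζ => (hrep ζ).symm
  -- the Sobolev weight is integrable
  have hT_int : Integrable (fun ζ : ℝ => (1 + ζ ^ 2) ^ ((j : ℝ) + α) * ‖FT (⇑u) ζ‖ ^ 2) := by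
    have h2π : (2 * Real.pi) ≠ 0 := by positivity
    obtain ⟨M, hMpos, hM⟩ := w.decay 0 0
    have hM' : ∀ x : ℝ, ‖w x‖ ≤ M := by
      intro x
      have := hM x
      simpa [norm_iteratedFDeriv_zero] using this
    have hM0 : 0 ≤ M := le_trans (norm_nonneg _) (hM' 0)
    have hFTle : ∀ ζ : ℝ, ‖FT (⇑u) ζ‖ ≤ ‖w (-ζ / (2 * Real.pi))‖ := by
      intro ζ
      rw [hrep ζ, norm_mul]
      have h1 : ‖((Real.sqrt (2 * Real.pi) : ℝ) : ℂ)⁻¹‖ ≤ 1 := by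
        rw [norm_inv, Complex.norm_real, Real.norm_eq_abs,
          _root_.abs_of_nonneg (Real.sqrt_nonneg _)]
        rw [inv_le_one_iff₀]
        right
        rw [show (1:ℝ) = Real.sqrt 1 by simp]
        exact Real.sqrt_le_sqrt (by linarith)
      calc ‖((Real.sqrt (2 * Real.pi) : ℝ) : ℂ)⁻¹‖ * ‖w (-ζ / (2 * Real.pi))‖
          ≤ 1 * ‖w (-ζ / (2 * Real.pi))‖ :=
            mul_le_mul_of_nonneg_right h1 (norm_nonneg _)
        _ = _ := one_mul _
    have h0 : Integrable (fun y : ℝ => ‖w (-y)‖) := by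
      have := w.integrable (μ := volume)
      simpa using this.norm.comp_neg
    have h1 : Integrable (fun y : ℝ => ‖y‖ ^ (2 * (j + 1)) * ‖w (-y)‖) := by
      have := (w.integrable_pow_mul volume (2 * (j + 1))).comp_neg
      simpa using this
    set K : ℝ := ((1 + 4 * Real.pi ^ 2) * 2) ^ (j + 1) with hK
    have hK0 : 0 ≤ K := by positivity
    have hg : Integrable (fun y : ℝ => (1 + (2 * Real.pi * y) ^ 2) ^ (j + 1) * ‖w (-y)‖) := by
      refine ((h0.add h1).const_mul K).mono' ?_ ?_
      · exact (((continuous_const.add ((continuous_const.mul continuous_id).pow 2)).pow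
          (j + 1)).mul (w.continuous.comp continuous_neg).norm).aestronglyMeasurable
      · refine Filter.Eventually.of_forall fun y => ?_
        simp only [Pi.add_apply]
        rw [Real.norm_eq_abs, _root_.abs_of_nonneg (by positivity)]
        have hbd : (1 + (2 * Real.pi * y) ^ 2) ^ (j + 1)
            ≤ K * (1 + ‖y‖ ^ (2 * (j + 1))) := by
          have step1 : 1 + (2 * Real.pi * y) ^ 2 ≤ (1 + 4 * Real.pi ^ 2) * (1 + y ^ 2) := by
            nlinarith [sq_nonneg y, sq_nonneg Real.pi]
          have step2 : (1 + (2 * Real.pi * y) ^ 2) ^ (j + 1)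
              ≤ ((1 + 4 * Real.pi ^ 2) * (1 + y ^ 2)) ^ (j + 1) :=
            pow_le_pow_left₀ (by positivity) step1 _
          have step3 : ((1 + 4 * Real.pi ^ 2) * (1 + y ^ 2)) ^ (j + 1)
              = (1 + 4 * Real.pi ^ 2) ^ (j + 1) * (1 + y ^ 2) ^ (j + 1) := mul_pow _ _ _
          have step4 : (1 + y ^ 2) ^ (j + 1) ≤ 2 ^ (j + 1) * (1 + ‖y‖ ^ (2 * (j + 1))) := by
            rcases le_total (y ^ 2) 1 with h | h
            · have : (1 + y ^ 2) ^ (j + 1) ≤ 2 ^ (j + 1) :=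
                pow_le_pow_left₀ (by positivity) (by linarith) _
              have h2 : (0:ℝ) ≤ ‖y‖ ^ (2 * (j + 1)) := by positivity
              nlinarith [pow_pos (show (0:ℝ) < 2 by norm_num) (j + 1)]
            · have hy : (1 + y ^ 2) ^ (j + 1) ≤ (2 * y ^ 2) ^ (j + 1) :=
                pow_le_pow_left₀ (by positivity) (by linarith) _
              have : (2 * y ^ 2) ^ (j + 1) = 2 ^ (j + 1) * ‖y‖ ^ (2 * (j + 1)) := by
                rw [Real.norm_eq_abs, mul_pow, pow_mul, _root_.sq_abs]
              rw [this] at hy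
              have h2 : (0:ℝ) < 2 ^ (j + 1) := by positivity
              nlinarith
          calc (1 + (2 * Real.pi * y) ^ 2) ^ (j + 1)
              ≤ (1 + 4 * Real.pi ^ 2) ^ (j + 1) * (1 + y ^ 2) ^ (j + 1) := by
                rw [← step3]; exact step2
            _ ≤ (1 + 4 * Real.pi ^ 2) ^ (j + 1) * (2 ^ (j + 1) * (1 + ‖y‖ ^ (2 * (j + 1)))) :=
                mul_le_mul_of_nonneg_left step4 (by positivity)
            _ = K * (1 + ‖y‖ ^ (2 * (j + 1))) := by rw [hK, mul_pow]; ring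
        calc (1 + (2 * Real.pi * y) ^ 2) ^ (j + 1) * ‖w (-y)‖
            ≤ (K * (1 + ‖y‖ ^ (2 * (j + 1)))) * ‖w (-y)‖ :=
              mul_le_mul_of_nonneg_right hbd (norm_nonneg _)
          _ = K * (‖w (-y)‖ + ‖y‖ ^ (2 * (j + 1)) * ‖w (-y)‖) := by ring
    have hgd : Integrable (fun ζ : ℝ => (1 + (2 * Real.pi * (ζ / (2 * Real.pi))) ^ 2) ^ (j + 1)
        * ‖w (-(ζ / (2 * Real.pi)))‖) := hg.comp_div h2π
    have hgd' : Integrable (fun ζ : ℝ => (1 + ζ ^ 2) ^ (j + 1) * ‖w (-ζ / (2 * Real.pi))‖) := by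
      refine hgd.congr (Filter.Eventually.of_forall fun ζ => ?_)
      have e1 : 2 * Real.pi * (ζ / (2 * Real.pi)) = ζ := by field_simp
      simp only [e1, neg_div]
    refine ((hgd'.const_mul M).mono' ?_ ?_)
    · refine (Continuous.mul ?_ (hFTc.norm.pow 2)).aestronglyMeasurable
      exact (continuous_const.add (continuous_pow 2)).rpow_const
        fun x => Or.inr (by positivity)
    · refine Filter.Eventually.of_forall fun ζ => ?_
      rw [Real.norm_eq_abs, _root_.abs_of_nonneg (by positivity)]
      have hr : (1 + ζ ^ 2) ^ ((j : ℝ) + α) ≤ (1 + ζ ^ 2) ^ (j + 1) := by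
        rw [show ((1 + ζ ^ 2) ^ (j + 1) : ℝ) = (1 + ζ ^ 2) ^ ((j + 1 : ℕ) : ℝ) by
          rw [Real.rpow_natCast]]
        apply Real.rpow_le_rpow_of_exponent_le (by nlinarith [sq_nonneg ζ])
        push_cast
        linarith
      have hFT2 : ‖FT (⇑u) ζ‖ ^ 2 ≤ M * ‖w (-ζ / (2 * Real.pi))‖ := by
        have h1 := hFTle ζ
        have h2 := hM' (-ζ / (2 * Real.pi))
        nlinarith [norm_nonneg (FT (⇑u) ζ), norm_nonneg (w (-ζ / (2 * Real.pi)))]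
      calc (1 + ζ ^ 2) ^ ((j : ℝ) + α) * ‖FT (⇑u) ζ‖ ^ 2
          ≤ (1 + ζ ^ 2) ^ (j + 1) * (M * ‖w (-ζ / (2 * Real.pi))‖) := by
            apply mul_le_mul hr hFT2 (by positivity)
            positivity
        _ = M * ((1 + ζ ^ 2) ^ (j + 1) * ‖w (-ζ / (2 * Real.pi))‖) := by ring
  -- set up the main estimate
  set T : ℝ → ℝ := fun ζ => (1 + ζ ^ 2) ^ ((j : ℝ) + α) * ‖FT (⇑u) ζ‖ ^ 2 with hTdef
  have hTc : Continuous T := by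
    refine Continuous.mul ?_ (hFTc.norm.pow 2)
    exact (continuous_const.add (continuous_pow 2)).rpow_const
      fun x => Or.inr (by positivity)
  have hT0 : ∀ ζ, 0 ≤ T ζ := fun ζ => by
    have : (0:ℝ) ≤ (1 + ζ ^ 2) ^ ((j : ℝ) + α) := Real.rpow_nonneg (by positivity) _
    positivity
  set N : ℝ → ℝ := fun ζ => |ζ| ^ (2 * (j + 1)) * ‖FT (⇑u) ζ‖ ^ 2 with hNdef
  have hNc : Continuous N := (_root_.continuous_abs.pow _).mul (hFTc.norm.pow 2)
  have hN0 : ∀ ζ, 0 ≤ N ζ := fun ζ => by positivity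
  set Kc : ℝ := 8 * Real.pi * Real.sin δ ^ (-1 - 2 * α) * ‖l‖ ^ (-2 - 4 * α) with hKcdef
  have hKc0 : 0 ≤ Kc := by positivity
  have hNT : ∀ ζ, N ζ * ((ζ ^ 2 / 4 + b ^ 2)⁻¹ * (2 * Real.pi / b)) ≤ Kc * T ζ := by
    intro ζ
    have h1 := weight_bound hb hα0 hα1 j ζ
    have h2 : b ^ (-1 - 2 * α) ≤ Real.sin δ ^ (-1 - 2 * α) * ‖l‖ ^ (-2 - 4 * α) := by
      have hx : 0 < Real.sin δ * ‖l‖ ^ 2 := by positivity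
      have h3 : ‖l‖ ^ (-2 - 4 * α) = (‖l‖ ^ (2 : ℕ)) ^ ((-1 - 2 * α) : ℝ) := by
        rw [← Real.rpow_natCast ‖l‖ 2, ← Real.rpow_mul (norm_nonneg l)]
        congr 1
        push_cast
        ring
      rw [h3, ← Real.mul_rpow hsin.le (by positivity)]
      exact Real.rpow_le_rpow_of_nonpos hx hbl (by linarith)
    have hFT0 : (0:ℝ) ≤ ‖FT (⇑u) ζ‖ ^ 2 := by positivity
    calc N ζ * ((ζ ^ 2 / 4 + b ^ 2)⁻¹ * (2 * Real.pi / b))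
        = (|ζ| ^ (2 * (j + 1)) * (ζ ^ 2 / 4 + b ^ 2)⁻¹ * (2 * Real.pi / b))
            * ‖FT (⇑u) ζ‖ ^ 2 := by rw [hNdef]; ring
      _ ≤ (8 * Real.pi * b ^ (-1 - 2 * α) * (1 + ζ ^ 2) ^ ((j : ℝ) + α))
            * ‖FT (⇑u) ζ‖ ^ 2 := mul_le_mul_of_nonneg_right h1 hFT0
      _ ≤ (8 * Real.pi * (Real.sin δ ^ (-1 - 2 * α) * ‖l‖ ^ (-2 - 4 * α))
            * (1 + ζ ^ 2) ^ ((j : ℝ) + α)) * ‖FT (⇑u) ζ‖ ^ 2 := by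
          have hrp : (0:ℝ) ≤ (1 + ζ ^ 2) ^ ((j : ℝ) + α) := Real.rpow_nonneg (by positivity) _
          refine mul_le_mul_of_nonneg_right (mul_le_mul_of_nonneg_right ?_ hrp) hFT0
          refine mul_le_mul_of_nonneg_left h2 (by positivity)
      _ = Kc * T ζ := by rw [hKcdef, hTdef]; ring
  -- norms in the denominator
  have hnorm : ∀ x : ℝ, ‖(x : ℂ) - l ^ 2‖ ^ 2 = (x - a) ^ 2 + b ^ 2 := by
    intro x
    rw [Complex.sq_norm, Complex.normSq_apply, Complex.sub_re,
      Complex.sub_im, Complex.ofReal_re, Complex.ofReal_im, ha, hbdef]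
    ring
  -- rewrite the integrand
  have hint_eq : (fun q : ℝ × ℝ => |q.1 - q.2| ^ (2 * (j + 1)) * ‖FT (⇑u) (q.1 - q.2)‖ ^ 2
      / (‖(q.1 : ℂ) - l ^ 2‖ ^ 2 * ‖(q.2 : ℂ) - l ^ 2‖ ^ 2))
      = fun q : ℝ × ℝ => N (q.1 - q.2) *
          ((((q.1 - a) ^ 2 + b ^ 2) * (((q.2 - a) ^ 2 + b ^ 2)))⁻¹) := by
    funext q
    rw [div_eq_mul_inv, hnorm q.1, hnorm q.2, hNdef]
  have hsob_eq : sobNormSq ((j : ℝ) + α) (⇑u) = ∫ ζ, T ζ := rfl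
  have hsob0 : 0 ≤ sobNormSq ((j : ℝ) + α) (⇑u) := by
    rw [hsob_eq]
    exact integral_nonneg hT0
  -- put everything together
  have key := core_bound (a := a) hb hNc hN0 hTc hT0 hT_int hKc0 hNT
  have hmeas : AEStronglyMeasurable (fun q : ℝ × ℝ => N (q.1 - q.2) *
      ((((q.1 - a) ^ 2 + b ^ 2) * (((q.2 - a) ^ 2 + b ^ 2)))⁻¹)) volume := by
    refine Continuous.aestronglyMeasurable ?_
    refine (hNc.comp (continuous_fst.sub continuous_snd)).mul (Continuous.inv₀ ?_ ?_)
    · fun_prop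
    · intro q
      have h1 : (0:ℝ) < (q.1 - a) ^ 2 + b ^ 2 := by positivity
      have h2 : (0:ℝ) < (q.2 - a) ^ 2 + b ^ 2 := by positivity
      exact (mul_pos h1 h2).ne'
  rw [hint_eq, integral_eq_lintegral_of_nonneg_ae
    (Filter.Eventually.of_forall fun q => by
      have h1 : (0:ℝ) < (q.1 - a) ^ 2 + b ^ 2 := by positivity
      have h2 : (0:ℝ) < (q.2 - a) ^ 2 + b ^ 2 := by positivity
      have := hN0 (q.1 - q.2)
      positivity) hmeas]
  refine ENNReal.toReal_le_of_le_ofReal (by positivity) ?_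
  refine key.trans ?_
  apply ENNReal.ofReal_le_ofReal
  rw [← hsob_eq, hKcdef]
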